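/- Let c_1,…,c_n be reals with c_1 = 0 and c_n = 1, and let d_1,…,d_n be reals with d_1 = d_n = 1 and d_i ≠ 0 for all i. Set A = F·D, Ã = T·(D·A·G)ᵀ·T, C = diag(c_1,…,c_n), and C̃ = I − T·C·T. Suppose A satisfies the fourth-order conditions: Tr(P·A) = 1, Tr(P·A·C) = 1/2, Tr(P·A·C·C) = 1/3, Tr(P·A·A·C) = 1/6, Tr(P·A·C·C·C) = 1/4, Tr(P·A·C·A·C) = 1/8, Tr(P·A·A·C·C) = 1/12, and Tr(P·A·A·A·C) = 1/24. Then the c-reflected tableau satisfies the same conditions: Tr(P·Ã) = 1, Tr(P·Ã·C̃) = 1/2, Tr(P·Ã·C̃·C̃) = 1/3, Tr(P·Ã·Ã·C̃) = 1/6, Tr(P·Ã·C̃·C̃·C̃) = 1/4, Tr(P·Ã·C̃·Ã·C̃) = 1/8, Tr(P·Ã·Ã·C̃·C̃) = 1/12, and Tr(P·Ã·Ã·Ã·C̃) = 1/24. -/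

import Mathlib

open Finset Matrix
/-- The matrix `D` with entries `d_{ij}`: `0` for `i < j`, `d_i` for `i = j`, and
`-d_j · (∏_{k=j+1}^{i-1} (1 - d_k)) · d_i` for `i > j`. -/
def Dmat (n : ℕ) (d : Fin n → ℝ) : Matrix (Fin n) (Fin n) ℝ :=
  Matrix.of fun i j =>
    if i < j then 0
    else if i = j then d i
    else -(d j) * (∏ k ∈ Finset.Ioo j i, (1 - d k)) * d i

/-- The lower-triangular matrix `G` with `G_{ii} = 1/d_i`, `G_{ij} = 1` for `i > j`. -/
noncomputable def Gmat (n : ℕ) (d : Fin n → ℝ) : Matrix (Fin n) (Fin n) ℝ :=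
  Matrix.of fun i j => if i = j then 1 / d i else if j < i then 1 else 0

/-- The matrix `F` with `F_{ij} = c_i - c_j` for `i > j` and `0` otherwise. -/
def Fmat (n : ℕ) (c : Fin n → ℝ) : Matrix (Fin n) (Fin n) ℝ :=
  Matrix.of fun i j => if j < i then c i - c j else 0

/-- The antidiagonal permutation matrix `T`, `T_{ij} = 1` iff `i + j = n + 1` (1-based). -/
def Tmat (n : ℕ) : Matrix (Fin n) (Fin n) ℝ :=
  Matrix.of fun i j => if (i : ℕ) + (j : ℕ) + 1 = n then 1 else 0

/-- The matrix `P` whose last column consists of ones and all other entries are `0`. -/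
def Pmat (n : ℕ) : Matrix (Fin n) (Fin n) ℝ :=
  Matrix.of fun _ j => if (j : ℕ) + 1 = n then 1 else 0

/-- ℕ-indexed version of the `D` matrix entries. -/
noncomputable def DDnat (e : ℕ → ℝ) (i j : ℕ) : ℝ :=
  if i < j then 0
  else if i = j then e i
  else -(e j) * (∏ k ∈ Finset.Ioo j i, (1 - e k)) * e i

lemma DDnat_lt (e : ℕ → ℝ) {i j : ℕ} (h : i < j) : DDnat e i j = 0 := by
  simp [DDnat, h]

lemma DDnat_diag (e : ℕ → ℝ) (i : ℕ) : DDnat e i i = e i := by simp [DDnat]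

lemma DDnat_gt (e : ℕ → ℝ) {i j : ℕ} (h : j < i) :
    DDnat e i j = -(e j) * (∏ k ∈ Finset.Ioo j i, (1 - e k)) * e i := by
  have : ¬ i < j := by omega
  have : i ≠ j := by omega
  simp [DDnat, *]

/-- Column telescoping: partial column sums of `D`. -/
lemma colTele (e : ℕ → ℝ) (j i : ℕ) (h : j + 1 ≤ i) :
    ∑ k ∈ Finset.Ico j i, DDnat e k j = e j * ∏ k ∈ Finset.Ioo j i, (1 - e k) := by
  induction i, h using Nat.le_induction with
  | base =>
      rw [Nat.Ico_succ_singleton, Finset.sum_singleton, DDnat_diag]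
      have : Finset.Ioo j (j+1) = ∅ := by
        ext x; simp
      simp [this]
  | succ i hji ih =>
      have h1 : Finset.Ico j (i + 1) = insert i (Finset.Ico j i) :=
        Nat.Ico_succ_right_eq_insert_Ico (by omega)
      have h2 : Finset.Ioo j (i + 1) = insert i (Finset.Ioo j i) := by
        ext x; simp; omega
      rw [h1, Finset.sum_insert (by simp), ih, h2,
        Finset.prod_insert (by simp), DDnat_gt e hji]
      ring

/-- Row telescoping: partial row sums of `D`. -/
lemma rowTele (e : ℕ → ℝ) (i : ℕ) : ∀ t m, m + t + 1 = i →
    ∑ k ∈ Finset.Ioc m i, DDnat e i k = e i * ∏ k ∈ Finset.Ioo m i, (1 - e k) := by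
  intro t
  induction t with
  | zero =>
      intro m hm
      have h1 : Finset.Ioc m i = {i} := by ext x; simp; omega
      have h2 : Finset.Ioo m i = ∅ := by ext x; simp; omega
      rw [h1, h2, Finset.sum_singleton, DDnat_diag]; simp
  | succ t ih =>
      intro m hm
      have h1 : Finset.Ioc m i = insert (m+1) (Finset.Ioc (m+1) i) := by
        ext x; simp; omega
      have h2 : Finset.Ioo m i = insert (m+1) (Finset.Ioo (m+1) i) := by
        ext x; simp; omega
      rw [h1, Finset.sum_insert (by simp), ih (m+1) (by omega), h2,
        Finset.prod_insert (by simp), DDnat_gt e (show m+1 < i by omega)]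
      ring

/-- ℕ-indexed version of the `G` matrix entries. -/
noncomputable def GGnat (e : ℕ → ℝ) (i j : ℕ) : ℝ :=
  if i = j then 1 / e i else if j < i then 1 else 0

lemma GGnat_diag (e : ℕ → ℝ) (i : ℕ) : GGnat e i i = 1 / e i := by simp [GGnat]
lemma GGnat_gt (e : ℕ → ℝ) {i j : ℕ} (h : j < i) : GGnat e i j = 1 := by
  have : i ≠ j := by omega
  simp [GGnat, *]
lemma GGnat_lt (e : ℕ → ℝ) {i j : ℕ} (h : i < j) : GGnat e i j = 0 := by
  have h1 : i ≠ j := by omega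
  have h2 : ¬ j < i := by omega
  simp [GGnat, h1, h2]

section level
variable {n : ℕ} {e : ℕ → ℝ}

/-- `G * D = 1` at the ℕ level. -/
lemma GD_nat (he : ∀ k, k < n → e k ≠ 0) {i j : ℕ} (hi : i < n) (hj : j < n) :
    ∑ k ∈ Finset.range n, GGnat e i k * DDnat e k j = if i = j then 1 else 0 := by
  rcases lt_trichotomy i j with h | h | h
  · rw [if_neg (by omega)]
    apply Finset.sum_eq_zero
    intro k _
    rcases lt_trichotomy k i with hk | hk | hk
    · rw [DDnat_lt e (by omega), mul_zero]
    · subst hk; rw [DDnat_lt e (by omega), mul_zero]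
    · rw [GGnat_lt e hk, zero_mul]
  · subst h
    rw [if_pos rfl, Finset.sum_eq_single i]
    · rw [GGnat_diag, DDnat_diag]
      field_simp [he i hi]
    · intro k _ hk
      rcases lt_trichotomy k i with h' | h' | h'
      · rw [DDnat_lt e h', mul_zero]
      · exact absurd h' hk
      · rw [GGnat_lt e h', zero_mul]
    · intro h; exact absurd (Finset.mem_range.2 hi) h
  · rw [if_neg (by omega)]
    have hsub : Finset.Icc j i ⊆ Finset.range n := by
      intro k hk; simp at hk ⊢; omega
    rw [← Finset.sum_subset hsub]
    · have hins : Finset.Icc j i = insert i (Finset.Ico j i) :=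
        (Finset.Ico_insert_right (le_of_lt h)).symm
      rw [hins, Finset.sum_insert (by simp), GGnat_diag]
      have : ∑ k ∈ Finset.Ico j i, GGnat e i k * DDnat e k j
          = ∑ k ∈ Finset.Ico j i, DDnat e k j := by
        apply Finset.sum_congr rfl
        intro k hk
        simp only [Finset.mem_Ico] at hk
        rw [GGnat_gt e hk.2, one_mul]
      rw [this, colTele e j i h, DDnat_gt e h]
      field_simp [he i hi]
      ring
    · intro k _ hk
      simp only [Finset.mem_Icc, not_and_or, not_le] at hk
      rcases hk with hk | hk
      · rw [DDnat_lt e hk, mul_zero]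
      · rw [GGnat_lt e hk, zero_mul]

/-- `D * G = 1` at the ℕ level. -/
lemma DG_nat (he : ∀ k, k < n → e k ≠ 0) {i j : ℕ} (hi : i < n) (hj : j < n) :
    ∑ k ∈ Finset.range n, DDnat e i k * GGnat e k j = if i = j then 1 else 0 := by
  rcases lt_trichotomy i j with h | h | h
  · rw [if_neg (by omega)]
    apply Finset.sum_eq_zero
    intro k _
    rcases lt_trichotomy k i with hk | hk | hk
    · rw [GGnat_lt e (by omega), mul_zero]
    · subst hk; rw [GGnat_lt e (by omega), mul_zero]
    · rw [DDnat_lt e hk, zero_mul]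
  · subst h
    rw [if_pos rfl, Finset.sum_eq_single i]
    · rw [GGnat_diag, DDnat_diag]
      field_simp [he i hi]
    · intro k _ hk
      rcases lt_trichotomy k i with h' | h' | h'
      · rw [GGnat_lt e h', mul_zero]
      · exact absurd h' hk
      · rw [DDnat_lt e h', zero_mul]
    · intro h; exact absurd (Finset.mem_range.2 hi) h
  · rw [if_neg (by omega)]
    have hsub : Finset.Icc j i ⊆ Finset.range n := by
      intro k hk; simp at hk ⊢; omega
    rw [← Finset.sum_subset hsub]
    · have hins : Finset.Icc j i = insert j (Finset.Ioc j i) :=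
        (Finset.Ioc_insert_left (le_of_lt h)).symm
      rw [hins, Finset.sum_insert (by simp), GGnat_diag]
      have : ∑ k ∈ Finset.Ioc j i, DDnat e i k * GGnat e k j
          = ∑ k ∈ Finset.Ioc j i, DDnat e i k := by
        apply Finset.sum_congr rfl
        intro k hk
        simp only [Finset.mem_Ioc] at hk
        rw [GGnat_gt e hk.1, mul_one]
      rw [this, rowTele e i (i - j - 1) j (by omega), DDnat_gt e h]
      field_simp [he j hj]
      ring
    · intro k _ hk
      simp only [Finset.mem_Icc, not_and_or, not_le] at hk
      rcases hk with hk | hk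
      · rw [GGnat_lt e hk, mul_zero]
      · rw [DDnat_lt e hk, zero_mul]

end level

section level2
variable {n : ℕ} {e : ℕ → ℝ}

/-- Row sums of `D` at the ℕ level. -/
lemma Drow_nat (he0 : e 0 = 1) {i : ℕ} (hi : i < n) :
    ∑ k ∈ Finset.range n, DDnat e i k = if i = 0 then 1 else 0 := by
  rcases Nat.eq_zero_or_pos i with h | h
  · subst h
    rw [if_pos rfl, Finset.sum_eq_single 0]
    · rw [DDnat_diag, he0]
    · intro k _ hk
      exact DDnat_lt e (by omega)
    · intro h; exact absurd (Finset.mem_range.2 hi) h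
  · rw [if_neg (by omega)]
    have hsub : Finset.Icc 0 i ⊆ Finset.range n := by
      intro k hk; simp at hk ⊢; omega
    rw [← Finset.sum_subset hsub]
    · have hins : Finset.Icc 0 i = insert 0 (Finset.Ioc 0 i) :=
        (Finset.Ioc_insert_left (by omega)).symm
      rw [hins, Finset.sum_insert (by simp), rowTele e i (i - 1) 0 (by omega),
        DDnat_gt e h, he0]
      ring
    · intro k _ hk
      simp only [Finset.mem_Icc, not_and_or, not_le] at hk
      rcases hk with hk | hk
      · omega
      · exact DDnat_lt e hk

/-- Column sums of `D` at the ℕ level. -/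
lemma Dcol_nat (hen : e (n - 1) = 1) {j : ℕ} (hj : j < n) :
    ∑ k ∈ Finset.range n, DDnat e k j = if j = n - 1 then 1 else 0 := by
  have hsub : Finset.Ico j n ⊆ Finset.range n := by
    intro k hk; simp at hk ⊢; omega
  rw [← Finset.sum_subset hsub (by
    intro k _ hk
    simp only [Finset.mem_Ico, not_and_or, not_le, not_lt] at hk
    rcases hk with hk | hk
    · exact DDnat_lt e hk
    · simp at *; omega)]
  rcases Nat.lt_or_ge j (n - 1) with h | h
  · rw [if_neg (by omega), colTele e j n (by omega)]
    have : (∏ k ∈ Finset.Ioo j n, (1 - e k)) = 0 := by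
      apply Finset.prod_eq_zero (i := n - 1)
      · simp only [Finset.mem_Ioo]; omega
      · rw [hen]; ring
    rw [this, mul_zero]
  · have hj' : j = n - 1 := by omega
    subst hj'
    rw [if_pos rfl]
    have : Finset.Ico (n-1) n = {n-1} := by ext x; simp; omega
    rw [this, Finset.sum_singleton, DDnat_diag, hen]

end level2

/-- Extension of `d` to `ℕ`. -/
noncomputable def extd (n : ℕ) (d : Fin n → ℝ) : ℕ → ℝ :=
  fun k => if h : k < n then d ⟨k, h⟩ else 1

section fintransfer
variable {n : ℕ} {d : Fin n → ℝ}

lemma extd_val (k : Fin n) : extd n d ↑k = d k := by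
  simp [extd, k.isLt]

lemma D_apply (i j : Fin n) : Dmat n d i j = DDnat (extd n d) ↑i ↑j := by
  have hprod : (∏ k ∈ Finset.Ioo j i, (1 - d k))
      = ∏ k ∈ Finset.Ioo (j : ℕ) (i : ℕ), (1 - extd n d k) := by
    rw [← Fin.map_valEmbedding_Ioo, Finset.prod_map]
    apply Finset.prod_congr rfl
    intro k _
    simp [extd_val]
  simp only [Dmat, DDnat, Matrix.of_apply, Fin.lt_def, ← Fin.val_eq_val, hprod, extd_val]

lemma G_apply (i j : Fin n) : Gmat n d i j = GGnat (extd n d) ↑i ↑j := by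
  simp only [Gmat, GGnat, Matrix.of_apply, Fin.lt_def, ← Fin.val_eq_val, extd_val]

lemma extd_ne (hd : ∀ i : Fin n, d i ≠ 0) (k : ℕ) (hk : k < n) : extd n d k ≠ 0 := by
  simp only [extd, dif_pos hk]; exact hd _

lemma GD_eq (hd : ∀ i : Fin n, d i ≠ 0) : Gmat n d * Dmat n d = 1 := by
  ext i j
  rw [Matrix.mul_apply]
  have : ∀ k : Fin n, Gmat n d i k * Dmat n d k j
      = (fun m => GGnat (extd n d) ↑i m * DDnat (extd n d) m ↑j) (k : ℕ) := by
    intro k; rw [G_apply, D_apply]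
  rw [Finset.sum_congr rfl (fun k _ => this k),
    Fin.sum_univ_eq_sum_range (fun m => GGnat (extd n d) ↑i m * DDnat (extd n d) m ↑j) n,
    GD_nat (extd_ne hd) i.isLt j.isLt]
  simp [Matrix.one_apply, Fin.val_eq_val]

lemma DG_eq (hd : ∀ i : Fin n, d i ≠ 0) : Dmat n d * Gmat n d = 1 := by
  ext i j
  rw [Matrix.mul_apply]
  have : ∀ k : Fin n, Dmat n d i k * Gmat n d k j
      = (fun m => DDnat (extd n d) ↑i m * GGnat (extd n d) m ↑j) (k : ℕ) := by
    intro k; rw [G_apply, D_apply]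
  rw [Finset.sum_congr rfl (fun k _ => this k),
    Fin.sum_univ_eq_sum_range (fun m => DDnat (extd n d) ↑i m * GGnat (extd n d) m ↑j) n,
    DG_nat (extd_ne hd) i.isLt j.isLt]
  simp [Matrix.one_apply, Fin.val_eq_val]

end fintransfer

section fintransfer2
variable {n : ℕ} {d : Fin n → ℝ} {c : Fin n → ℝ}

lemma Drow_sum (hn : 2 ≤ n) (hd1 : d ⟨0, by have := hn; omega⟩ = 1) (i : Fin n) :
    ∑ j, Dmat n d i j = if (i : ℕ) = 0 then 1 else 0 := by
  have he0 : extd n d 0 = 1 := by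
    rw [show (0:ℕ) = ((⟨0, by omega⟩ : Fin n) : ℕ) from rfl, extd_val, hd1]
  have : ∀ k : Fin n, Dmat n d i k = (fun m => DDnat (extd n d) ↑i m) (k : ℕ) := by
    intro k; rw [D_apply]
  rw [Finset.sum_congr rfl (fun k _ => this k),
    Fin.sum_univ_eq_sum_range (fun m => DDnat (extd n d) ↑i m) n,
    Drow_nat he0 i.isLt]

lemma Dcol_sum (hn : 2 ≤ n) (hdn : d ⟨n - 1, by have := hn; omega⟩ = 1) (j : Fin n) :
    ∑ i, Dmat n d i j = if (j : ℕ) = n - 1 then 1 else 0 := by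
  have hen : extd n d (n - 1) = 1 := by
    rw [show (n - 1 : ℕ) = ((⟨n - 1, by omega⟩ : Fin n) : ℕ) from rfl, extd_val, hdn]
  have : ∀ k : Fin n, Dmat n d k j = (fun m => DDnat (extd n d) m ↑j) (k : ℕ) := by
    intro k; rw [D_apply]
  rw [Finset.sum_congr rfl (fun k _ => this k),
    Fin.sum_univ_eq_sum_range (fun m => DDnat (extd n d) m ↑j) n,
    Dcol_nat hen j.isLt]

lemma G_col0 (hn : 2 ≤ n) (hd1 : d ⟨0, by have := hn; omega⟩ = 1) (k : Fin n) :
    Gmat n d k ⟨0, by have := hn; omega⟩ = 1 := by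
  rcases eq_or_ne k ⟨0, by omega⟩ with h | h
  · subst h; simp [Gmat, hd1]
  · have hlt : (⟨0, by omega⟩ : Fin n) < k := by
      rw [Fin.lt_def]
      show 0 < (k : ℕ)
      have : (k : ℕ) ≠ 0 := by
        intro hc; exact h (Fin.ext hc)
      omega
    simp [Gmat, h, hlt]

/-- `F = C * G - G * C` (entrywise identity). -/
lemma F_eq (hd : ∀ i : Fin n, d i ≠ 0) :
    Fmat n c = Matrix.diagonal c * Gmat n d - Gmat n d * Matrix.diagonal c := by
  ext i j
  rw [Matrix.sub_apply, Matrix.diagonal_mul, Matrix.mul_diagonal]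
  rcases lt_trichotomy j i with h | h | h
  · have h1 : i ≠ j := by exact fun hh => absurd hh.symm h.ne
    simp [Fmat, Gmat, h, h1]
  · subst h; simp [Fmat, Gmat, lt_irrefl]; ring
  · have h1 : i ≠ j := h.ne
    have h2 : ¬ j < i := by exact not_lt.2 h.le
    simp [Fmat, Gmat, h1, h2]

lemma P_mul_diag (hn : 2 ≤ n) (hcn : c ⟨n - 1, by have := hn; omega⟩ = 1) :
    Pmat n * Matrix.diagonal c = Pmat n := by
  ext i j
  rw [Matrix.mul_diagonal]
  by_cases h : (j : ℕ) + 1 = n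
  · have hj : j = ⟨n - 1, by omega⟩ := by
      apply Fin.ext; simp; omega
    rw [hj, hcn]
    simp [Pmat]
  · simp [Pmat, h]

lemma T_mul_T (hn : 2 ≤ n) : Tmat n * Tmat n = 1 := by
  ext i j
  rw [Matrix.mul_apply, Finset.sum_eq_single (Fin.rev i)]
  · have hi := i.isLt
    have hj := j.isLt
    have h1 : (i : ℕ) + (Fin.rev i : ℕ) + 1 = n := by
      simp only [Fin.val_rev]; omega
    have h2 : ((Fin.rev i : ℕ) + (j : ℕ) + 1 = n) ↔ i = j := by
      rw [Fin.ext_iff]; simp only [Fin.val_rev]; omega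
    rw [show Tmat n i (Fin.rev i) = 1 by
      simp only [Tmat, Matrix.of_apply]; rw [if_pos h1], one_mul]
    simp only [Tmat, Matrix.of_apply, Matrix.one_apply]
    by_cases h : i = j
    · rw [if_pos (h2.mpr h), if_pos h]
    · rw [if_neg (fun hc => h (h2.mp hc)), if_neg h]
  · intro b _ hb
    have hi := i.isLt
    have hb2 := b.isLt
    have : ¬ ((i : ℕ) + (b : ℕ) + 1 = n) := by
      intro hc
      apply hb
      apply Fin.ext
      simp only [Fin.val_rev]; omega
    simp only [Tmat, Matrix.of_apply]
    rw [if_neg this, zero_mul]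
  · intro h; exact absurd (Finset.mem_univ _) h

end fintransfer2

section tracelem
variable {n : ℕ} {d c : Fin n → ℝ}

lemma trace_P_mul (hn : 2 ≤ n) (X : Matrix (Fin n) (Fin n) ℝ) :
    Matrix.trace (Pmat n * X) = ∑ j, X ⟨n - 1, by have := hn; omega⟩ j := by
  have h : ∀ i, (Pmat n * X) i i = X ⟨n - 1, by omega⟩ i := by
    intro i
    rw [Matrix.mul_apply, Finset.sum_eq_single (⟨n - 1, by omega⟩ : Fin n)]
    · have : ((⟨n - 1, by omega⟩ : Fin n) : ℕ) + 1 = n := by simp; omega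
      simp [Pmat, this]
    · intro b _ hb
      have : ¬ ((b : ℕ) + 1 = n) := by
        intro hcc
        exact hb (Fin.ext (by simp; omega))
      simp [Pmat, this]
    · intro h; exact absurd (Finset.mem_univ _) h
  exact Finset.sum_congr rfl (fun i _ => h i)

lemma T_mul_apply (N : Matrix (Fin n) (Fin n) ℝ) (i j : Fin n) :
    (Tmat n * N) i j = N (Fin.rev i) j := by
  rw [Matrix.mul_apply, Finset.sum_eq_single (Fin.rev i)]
  · have hi := i.isLt
    have h1 : (i : ℕ) + (Fin.rev i : ℕ) + 1 = n := by
      simp only [Fin.val_rev]; omega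
    simp only [Tmat, Matrix.of_apply]
    rw [if_pos h1, one_mul]
  · intro b _ hb
    have hi := i.isLt
    have hb2 := b.isLt
    have : ¬ ((i : ℕ) + (b : ℕ) + 1 = n) := by
      intro hcc
      apply hb
      apply Fin.ext
      simp only [Fin.val_rev]; omega
    simp only [Tmat, Matrix.of_apply]
    rw [if_neg this, zero_mul]
  · intro h; exact absurd (Finset.mem_univ _) h

lemma lemA' (hn : 2 ≤ n) (N : Matrix (Fin n) (Fin n) ℝ) :
    Matrix.trace (Pmat n * (Tmat n * N)) = ∑ j, Nᵀ j ⟨0, by have := hn; omega⟩ := by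
  rw [trace_P_mul hn]
  refine Finset.sum_congr rfl fun j _ => ?_
  rw [T_mul_apply]
  have : Fin.rev (⟨n - 1, by omega⟩ : Fin n) = ⟨0, by omega⟩ := by
    apply Fin.ext; simp only [Fin.val_rev]; omega
  rw [this, Matrix.transpose_apply]

lemma lemC (hn : 2 ≤ n) (W : Matrix (Fin n) (Fin n) ℝ) :
    ∑ j, (Tmat n * W) j ⟨0, by have := hn; omega⟩ = ∑ j, W j ⟨0, by have := hn; omega⟩ := by
  have h : ∀ j, (Tmat n * W) j ⟨0, by omega⟩ = W (Fin.rev j) ⟨0, by omega⟩ :=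
    fun j => T_mul_apply W j _
  rw [Finset.sum_congr rfl (fun j _ => h j)]
  exact Fintype.sum_bijective Fin.rev Fin.rev_involutive.bijective
    (fun j => W (Fin.rev j) ⟨0, by omega⟩) (fun j => W j ⟨0, by omega⟩) (fun j => rfl)

lemma sumD (hn : 2 ≤ n) (hdn : d ⟨n - 1, by have := hn; omega⟩ = 1) (X : Matrix (Fin n) (Fin n) ℝ) :
    ∑ j, (Dmat n d * X) j ⟨0, by have := hn; omega⟩ = X ⟨n - 1, by have := hn; omega⟩ ⟨0, by have := hn; omega⟩ := by
  simp only [Matrix.mul_apply]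
  rw [Finset.sum_comm]
  have h : ∀ k : Fin n, ∑ j, Dmat n d j k * X k ⟨0, by omega⟩
      = (if (k : ℕ) = n - 1 then 1 else 0) * X k ⟨0, by omega⟩ := by
    intro k
    rw [← Finset.sum_mul, Dcol_sum hn hdn k]
  rw [Finset.sum_congr rfl (fun k _ => h k), Finset.sum_eq_single (⟨n - 1, by omega⟩ : Fin n)]
  · simp
  · intro b _ hb
    have : ¬ ((b : ℕ) = n - 1) := by
      intro hcc; exact hb (Fin.ext (by simpa using hcc))
    rw [if_neg this, zero_mul]
  · intro h; exact absurd (Finset.mem_univ _) h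

lemma lemFin (hn : 2 ≤ n) (hd1 : d ⟨0, by have := hn; omega⟩ = 1) (hdn : d ⟨n - 1, by have := hn; omega⟩ = 1)
    (U : Matrix (Fin n) (Fin n) ℝ) :
    ∑ j, (Dmat n d * (U * Gmat n d)) j ⟨0, by have := hn; omega⟩ = Matrix.trace (Pmat n * U) := by
  rw [sumD hn hdn, trace_P_mul hn, Matrix.mul_apply]
  refine Finset.sum_congr rfl fun k _ => ?_
  rw [G_col0 hn hd1 k, mul_one]

lemma T_symm : (Tmat n)ᵀ = Tmat n := by
  ext i j
  simp only [Matrix.transpose_apply, Tmat, Matrix.of_apply]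
  by_cases h : (j : ℕ) + (i : ℕ) + 1 = n
  · rw [if_pos h, if_pos (by omega)]
  · rw [if_neg h, if_neg (by omega)]

lemma A_row_sum (hn : 2 ≤ n) (hd1 : d ⟨0, by have := hn; omega⟩ = 1) (hc1 : c ⟨0, by have := hn; omega⟩ = 0)
    (i : Fin n) : ∑ j, (Fmat n c * Dmat n d) i j = c i := by
  simp only [Matrix.mul_apply]
  rw [Finset.sum_comm]
  have h : ∀ k : Fin n, ∑ j, Fmat n c i k * Dmat n d k j
      = Fmat n c i k * (if (k : ℕ) = 0 then 1 else 0) := by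
    intro k
    rw [← Finset.mul_sum, Drow_sum hn hd1 k]
  rw [Finset.sum_congr rfl (fun k _ => h k), Finset.sum_eq_single (⟨0, by omega⟩ : Fin n)]
  · rcases eq_or_ne i ⟨0, by omega⟩ with h | h
    · rw [h]; simp [Fmat, hc1]
    · have hlt : (⟨0, by omega⟩ : Fin n) < i := by
        rw [Fin.lt_def]
        show 0 < (i : ℕ)
        have : (i : ℕ) ≠ 0 := fun hcc => h (Fin.ext hcc)
        omega
      simp [Fmat, hlt, hc1]
  · intro b _ hb
    have : ¬ ((b : ℕ) = 0) := by
      intro hcc; exact hb (Fin.ext (by simpa using hcc))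
    rw [if_neg this, mul_zero]
  · intro h; exact absurd (Finset.mem_univ _) h

end tracelem
theorem stmt_16 (n : ℕ) (hn : 2 ≤ n) (c d : Fin n → ℝ)
    (hc1 : c ⟨0, by omega⟩ = 0) (hcn : c ⟨n - 1, by omega⟩ = 1)
    (hd1 : d ⟨0, by omega⟩ = 1) (hdn : d ⟨n - 1, by omega⟩ = 1)
    (hd : ∀ i : Fin n, d i ≠ 0)
    (A Atil C Ctil : Matrix (Fin n) (Fin n) ℝ)
    (hA : A = Fmat n c * Dmat n d)
    (hAtil : Atil = Tmat n * (Dmat n d * A * Gmat n d)ᵀ * Tmat n)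
    (hC : C = Matrix.diagonal c)
    (hCtil : Ctil = 1 - Tmat n * C * Tmat n)
    (h1 : Matrix.trace (Pmat n * A) = 1)
    (h2 : Matrix.trace (Pmat n * A * C) = 1 / 2)
    (h3 : Matrix.trace (Pmat n * A * C * C) = 1 / 3)
    (h4 : Matrix.trace (Pmat n * A * A * C) = 1 / 6)
    (h5 : Matrix.trace (Pmat n * A * C * C * C) = 1 / 4)
    (h6 : Matrix.trace (Pmat n * A * C * A * C) = 1 / 8)
    (h7 : Matrix.trace (Pmat n * A * A * C * C) = 1 / 12)
    (h8 : Matrix.trace (Pmat n * A * A * A * C) = 1 / 24) :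
    Matrix.trace (Pmat n * Atil) = 1 ∧
    Matrix.trace (Pmat n * Atil * Ctil) = 1 / 2 ∧
    Matrix.trace (Pmat n * Atil * Ctil * Ctil) = 1 / 3 ∧
    Matrix.trace (Pmat n * Atil * Atil * Ctil) = 1 / 6 ∧
    Matrix.trace (Pmat n * Atil * Ctil * Ctil * Ctil) = 1 / 4 ∧
    Matrix.trace (Pmat n * Atil * Ctil * Atil * Ctil) = 1 / 8 ∧
    Matrix.trace (Pmat n * Atil * Atil * Ctil * Ctil) = 1 / 12 ∧
    Matrix.trace (Pmat n * Atil * Atil * Atil * Ctil) = 1 / 24 := by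
  -- normalize hypotheses to right-associated form
  simp only [Matrix.mul_assoc] at h2 h3 h4 h5 h6 h7 h8
  -- core matrix identities
  have hGD : Gmat n d * Dmat n d = 1 := GD_eq hd
  have hDG : Dmat n d * Gmat n d = 1 := DG_eq hd
  have hTT : Tmat n * Tmat n = 1 := T_mul_T hn
  have Gcancel : ∀ X : Matrix (Fin n) (Fin n) ℝ, Gmat n d * (Dmat n d * X) = X := by
    intro X; rw [← Matrix.mul_assoc, hGD, one_mul]
  have Tcancel : ∀ X : Matrix (Fin n) (Fin n) ℝ, Tmat n * (Tmat n * X) = X := by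
    intro X; rw [← Matrix.mul_assoc, hTT, one_mul]
  have hFe : Fmat n c = C * Gmat n d - Gmat n d * C := by rw [hC]; exact F_eq hd
  have key1 : A = C - Gmat n d * (C * Dmat n d) := by
    rw [hA, hFe, Matrix.sub_mul, Matrix.mul_assoc C, hGD, mul_one, Matrix.mul_assoc]
  have key2 : Dmat n d * A = Dmat n d * C - C * Dmat n d := by
    rw [key1, Matrix.mul_sub, ← Matrix.mul_assoc (Dmat n d) (Gmat n d), hDG, one_mul]
  have hComm : (1 - C) * Dmat n d = Dmat n d * (1 - C + A) := by
    rw [mul_add, mul_sub, mul_one, key2, sub_mul, one_mul]; abel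
  have cstepR : ∀ X : Matrix (Fin n) (Fin n) ℝ,
      (1 - C) * (Dmat n d * X) = Dmat n d * ((1 - C + A) * X) := by
    intro X; rw [← Matrix.mul_assoc, hComm, Matrix.mul_assoc]
  have hCt2 : Ctil = Tmat n * ((1 - C) * Tmat n) := by
    rw [hCtil, sub_mul, one_mul, mul_sub, hTT, ← Matrix.mul_assoc]
  have hCsymm : Cᵀ = C := by rw [hC, Matrix.diagonal_transpose]
  have hPB : ∀ X : Matrix (Fin n) (Fin n) ℝ,
      Pmat n * ((1 - C + A) * X) = Pmat n * (A * X) := by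
    intro X
    rw [← Matrix.mul_assoc, ← Matrix.mul_assoc]
    congr 1
    rw [mul_add, mul_sub, mul_one, hC, P_mul_diag hn hcn]
    abel
  -- the trailing rule
  have hArows : ∀ k, ∑ j, A k j = c k := by
    intro k; rw [hA]; exact A_row_sum hn hd1 hc1 k
  have hCrows : ∀ k, ∑ j, C k j = c k := by
    intro k
    rw [hC]
    rw [Finset.sum_eq_single k]
    · simp
    · intro b _ hb; exact Matrix.diagonal_apply_ne' c hb
    · intro h; exact absurd (Finset.mem_univ _) h
  have trailing : ∀ X : Matrix (Fin n) (Fin n) ℝ,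
      Matrix.trace (Pmat n * (X * A)) = Matrix.trace (Pmat n * (X * C)) := by
    intro X
    rw [trace_P_mul hn, trace_P_mul hn]
    have key : ∀ Y : Matrix (Fin n) (Fin n) ℝ, (∀ k, ∑ j, Y k j = c k) →
        ∑ j, (X * Y) (⟨n - 1, by omega⟩ : Fin n) j
          = ∑ k, X (⟨n - 1, by omega⟩ : Fin n) k * c k := by
      intro Y hY
      simp only [Matrix.mul_apply]
      rw [Finset.sum_comm]
      exact Finset.sum_congr rfl fun k _ => by rw [← Finset.mul_sum, hY k]
    rw [key A hArows, key C hCrows]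
  -- values of words ending in A
  have wAA : Matrix.trace (Pmat n * (A * A)) = 1 / 2 := by
    have h := trailing A; rw [h, h2]
  have wACA : Matrix.trace (Pmat n * (A * (C * A))) = 1 / 3 := by
    have h := trailing (A * C)
    simp only [Matrix.mul_assoc] at h
    rw [h, h3]
  have wAAA : Matrix.trace (Pmat n * (A * (A * A))) = 1 / 6 := by
    have h := trailing (A * A)
    simp only [Matrix.mul_assoc] at h
    rw [h, h4]
  have wACCA : Matrix.trace (Pmat n * (A * (C * (C * A)))) = 1 / 4 := by
    have h := trailing (A * C * C)
    simp only [Matrix.mul_assoc] at h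
    rw [h, h5]
  have wACAA : Matrix.trace (Pmat n * (A * (C * (A * A)))) = 1 / 8 := by
    have h := trailing (A * C * A)
    simp only [Matrix.mul_assoc] at h
    rw [h, h6]
  have wAACA : Matrix.trace (Pmat n * (A * (A * (C * A)))) = 1 / 12 := by
    have h := trailing (A * A * C)
    simp only [Matrix.mul_assoc] at h
    rw [h, h7]
  have wAAAA : Matrix.trace (Pmat n * (A * (A * (A * A)))) = 1 / 24 := by
    have h := trailing (A * A * A)
    simp only [Matrix.mul_assoc] at h
    rw [h, h8]
  -- values of the reduced words
  have t2 : Matrix.trace (Pmat n * ((1 - C + A) * A)) = 1 / 2 := by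
    rw [hPB, wAA]
  have t3 : Matrix.trace (Pmat n * ((1 - C + A) * ((1 - C + A) * A))) = 1 / 3 := by
    rw [hPB]
    simp only [add_mul, sub_mul, one_mul, mul_add, mul_sub, Matrix.trace_add,
      Matrix.trace_sub, Matrix.mul_assoc]
    rw [wAA, wACA, wAAA]; norm_num
  have t4 : Matrix.trace (Pmat n * ((1 - C + A) * (A * A))) = 1 / 6 := by
    rw [hPB, wAAA]
  have t5 : Matrix.trace (Pmat n * ((1 - C + A) * ((1 - C + A) * ((1 - C + A) * A))))
      = 1 / 4 := by
    rw [hPB]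
    simp only [add_mul, sub_mul, one_mul, mul_add, mul_sub, Matrix.trace_add,
      Matrix.trace_sub, Matrix.mul_assoc]
    rw [wAA, wACA, wAAA, wACCA, wACAA, wAACA, wAAAA]; norm_num
  have t6 : Matrix.trace (Pmat n * ((1 - C + A) * (A * ((1 - C + A) * A)))) = 1 / 8 := by
    rw [hPB]
    simp only [add_mul, sub_mul, one_mul, mul_add, mul_sub, Matrix.trace_add,
      Matrix.trace_sub, Matrix.mul_assoc]
    rw [wAAA, wAACA, wAAAA]; norm_num
  have t7 : Matrix.trace (Pmat n * ((1 - C + A) * ((1 - C + A) * (A * A)))) = 1 / 12 := by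
    rw [hPB]
    simp only [add_mul, sub_mul, one_mul, mul_add, mul_sub, Matrix.trace_add,
      Matrix.trace_sub, Matrix.mul_assoc]
    rw [wAAA, wACAA, wAAAA]; norm_num
  have t8 : Matrix.trace (Pmat n * ((1 - C + A) * (A * (A * A)))) = 1 / 24 := by
    rw [hPB, wAAAA]
  -- the eight goals
  refine ⟨?_, ?_, ?_, ?_, ?_, ?_, ?_, ?_⟩
  · -- Tr(P Ã) = 1
    rw [hAtil]
    simp only [Matrix.mul_assoc]
    rw [lemA' hn]
    simp only [Matrix.transpose_mul, Matrix.transpose_transpose, Matrix.transpose_sub,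
      Matrix.transpose_one, hCsymm, T_symm, Matrix.mul_assoc]
    rw [lemC hn]
    rw [← h1, ← lemFin hn hd1 hdn]
  · rw [hAtil, hCt2]
    simp only [Matrix.mul_assoc]
    simp only [Tcancel]
    rw [lemA' hn]
    simp only [Matrix.transpose_mul, Matrix.transpose_transpose, Matrix.transpose_sub,
      Matrix.transpose_one, hCsymm, T_symm, Matrix.mul_assoc]
    rw [lemC hn]
    rw [← t2, ← lemFin hn hd1 hdn]
    simp only [Matrix.mul_assoc, cstepR, Gcancel]
  · rw [hAtil, hCt2]
    simp only [Matrix.mul_assoc]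
    simp only [Tcancel]
    rw [lemA' hn]
    simp only [Matrix.transpose_mul, Matrix.transpose_transpose, Matrix.transpose_sub,
      Matrix.transpose_one, hCsymm, T_symm, Matrix.mul_assoc]
    rw [lemC hn]
    rw [← t3, ← lemFin hn hd1 hdn]
    simp only [Matrix.mul_assoc, cstepR, Gcancel]
  · rw [hAtil, hCt2]
    simp only [Matrix.mul_assoc]
    simp only [Tcancel]
    rw [lemA' hn]
    simp only [Matrix.transpose_mul, Matrix.transpose_transpose, Matrix.transpose_sub,
      Matrix.transpose_one, hCsymm, T_symm, Matrix.mul_assoc]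
    rw [lemC hn]
    rw [← t4, ← lemFin hn hd1 hdn]
    simp only [Matrix.mul_assoc, cstepR, Gcancel]
  · rw [hAtil, hCt2]
    simp only [Matrix.mul_assoc]
    simp only [Tcancel]
    rw [lemA' hn]
    simp only [Matrix.transpose_mul, Matrix.transpose_transpose, Matrix.transpose_sub,
      Matrix.transpose_one, hCsymm, T_symm, Matrix.mul_assoc]
    rw [lemC hn]
    rw [← t5, ← lemFin hn hd1 hdn]
    simp only [Matrix.mul_assoc, cstepR, Gcancel]
  · rw [hAtil, hCt2]
    simp only [Matrix.mul_assoc]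
    simp only [Tcancel]
    rw [lemA' hn]
    simp only [Matrix.transpose_mul, Matrix.transpose_transpose, Matrix.transpose_sub,
      Matrix.transpose_one, hCsymm, T_symm, Matrix.mul_assoc]
    rw [lemC hn]
    rw [← t6, ← lemFin hn hd1 hdn]
    simp only [Matrix.mul_assoc, cstepR, Gcancel]
  · rw [hAtil, hCt2]
    simp only [Matrix.mul_assoc]
    simp only [Tcancel]
    rw [lemA' hn]
    simp only [Matrix.transpose_mul, Matrix.transpose_transpose, Matrix.transpose_sub,
      Matrix.transpose_one, hCsymm, T_symm, Matrix.mul_assoc]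
    rw [lemC hn]
    rw [← t7, ← lemFin hn hd1 hdn]
    simp only [Matrix.mul_assoc, cstepR, Gcancel]
  · rw [hAtil, hCt2]
    simp only [Matrix.mul_assoc]
    simp only [Tcancel]
    rw [lemA' hn]
    simp only [Matrix.transpose_mul, Matrix.transpose_transpose, Matrix.transpose_sub,
      Matrix.transpose_one, hCsymm, T_symm, Matrix.mul_assoc]
    rw [lemC hn]
    rw [← t8, ← lemFin hn hd1 hdn]
    simp only [Matrix.mul_assoc, cstepR, Gcancel]
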